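/- Let L be an n×n ICB matrix and K a field. Then for every i ∈ {1,…,n}, the radical of the ideal I(L) + (x_i) of K[x₁,…,xₙ] equals the maximal ideal 𝔪 = (x₁,…,xₙ). -/

import Mathlib

open MvPolynomial Finset

/-- A critical binomial (CB) matrix. -/
def IsCB (n : ℕ) (L : Matrix (Fin n) (Fin n) ℤ) : Prop :=
  (∀ i, 0 < L i i) ∧ (∀ i j : Fin n, i ≠ j → L i j ≤ 0) ∧ (∀ i, ∑ j, L i j = 0) ∧
    (∀ j, ∃ i, i ≠ j ∧ L i j ≠ 0)

/-- Irreducibility of a square matrix. -/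
def IsIrreducibleMat {n : ℕ} (M : Matrix (Fin n) (Fin n) ℤ) : Prop :=
  ¬ ∃ I J : Set (Fin n), I.Nonempty ∧ J.Nonempty ∧ Disjoint I J ∧ I ∪ J = Set.univ ∧
      ∀ i ∈ I, ∀ j ∈ J, M i j = 0

def IsICB (n : ℕ) (L : Matrix (Fin n) (Fin n) ℤ) : Prop := IsCB n L ∧ IsIrreducibleMat L

def IsPCB (n : ℕ) (L : Matrix (Fin n) (Fin n) ℤ) : Prop :=
  IsCB n L ∧ ∀ i j : Fin n, i ≠ j → L i j < 0

noncomputable def posPart {n : ℕ} (m : Fin n → ℤ) : Fin n →₀ ℕ :=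
  Finsupp.equivFunOnFinite.symm fun i => (m i).toNat

noncomputable def negPart {n : ℕ} (m : Fin n → ℤ) : Fin n →₀ ℕ :=
  Finsupp.equivFunOnFinite.symm fun i => (-(m i)).toNat

noncomputable def binom (K : Type*) [Field K] {n : ℕ} (m : Fin n → ℤ) :
    MvPolynomial (Fin n) K :=
  monomial (posPart m) 1 - monomial (negPart m) 1

def colLattice {n : ℕ} (L : Matrix (Fin n) (Fin n) ℤ) : AddSubgroup (Fin n → ℤ) :=
  AddSubgroup.closure {v | ∃ j : Fin n, v = fun i => L i j}

noncomputable def latticeIdeal (K : Type*) [Field K] {n : ℕ} (L : Matrix (Fin n) (Fin n) ℤ) :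
    Ideal (MvPolynomial (Fin n) K) :=
  Ideal.span {f | ∃ m ∈ colLattice L, f = binom K m}

noncomputable def matrixIdeal (K : Type*) [Field K] {n : ℕ} (L : Matrix (Fin n) (Fin n) ℤ) :
    Ideal (MvPolynomial (Fin n) K) :=
  Ideal.span {f | ∃ j : Fin n, f = binom K fun i => L i j}

def chi {n : ℕ} (C : Finset (Fin n)) : Fin n → ℤ := fun i => if i ∈ C then 1 else 0

/-- Membership in the ideal generated by all variables is vanishing of the constant
coefficient. -/
lemma aux_mem_span_X {n : ℕ} {K : Type*} [Field K] (f : MvPolynomial (Fin n) K) :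
    f ∈ Ideal.span (Set.range (X : Fin n → MvPolynomial (Fin n) K)) ↔ constantCoeff f = 0 := by
  rw [show Set.range (X : Fin n → MvPolynomial (Fin n) K) = X '' Set.univ by simp,
    mem_ideal_span_X_image]
  constructor
  · intro h
    by_contra hc
    obtain ⟨i, -, hi⟩ := h 0 (by simpa [mem_support_iff, constantCoeff_eq] using hc)
    simp at hi
  · intro h m hm
    rcases eq_or_ne m 0 with rfl | hm0
    · exact absurd (mem_support_iff.mp hm) (by simpa [constantCoeff_eq] using h)
    · obtain ⟨i, hi⟩ := Finsupp.ne_iff.mp hm0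
      exact ⟨i, trivial, by simpa using hi⟩

lemma aux_monomial_eq_prod {n : ℕ} {K : Type*} [Field K] (q : Fin n →₀ ℕ) :
    (monomial q (1:K)) = ∏ k, X k ^ q k := by
  rw [monomial_eq, C_1, one_mul, Finsupp.prod_fintype]
  intro; rw [pow_zero]

/-- If `L` is an `n × n` ICB matrix and `K` a field, then for every
`i ∈ {1,…,n}`, the radical of `I(L) + (xᵢ)` equals the maximal ideal `𝔪 = (x₁,…,xₙ)`. -/
theorem radical_matrixIdeal_sup_var (n : ℕ) (hn : 3 ≤ n)
    (L : Matrix (Fin n) (Fin n) ℤ) (hL : IsICB n L)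
    (K : Type*) [Field K] :
    ∀ i : Fin n,
      (matrixIdeal K L ⊔ Ideal.span {(X i : MvPolynomial (Fin n) K)}).radical =
        Ideal.span (Set.range (X : Fin n → MvPolynomial (Fin n) K)) := by
  obtain ⟨⟨hdiag, hoff, hrow, hcol⟩, hirr⟩ := hL
  intro i
  set I0 : Ideal (MvPolynomial (Fin n) K) :=
    matrixIdeal K L ⊔ Ideal.span {(X i : MvPolynomial (Fin n) K)} with hI0
  -- positive part of each column is concentrated on the diagonal
  have hpos : ∀ j : Fin n, _root_.posPart (fun k => L k j) = Finsupp.single j (L j j).toNat := by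
    intro j
    ext k
    rcases eq_or_ne k j with rfl | h
    · simp [_root_.posPart]
    · simp [_root_.posPart, Finsupp.single_apply, h, h.symm, Int.toNat_of_nonpos (hoff k j h)]
  -- binomials of columns have zero constant coefficient
  have hbinmem : ∀ j : Fin n, binom K (fun k => L k j) ∈ matrixIdeal K L := fun j =>
    Ideal.subset_span ⟨j, rfl⟩
  -- Step 1 : I0 ≤ 𝔪
  have hle : I0 ≤ Ideal.span (Set.range (X : Fin n → MvPolynomial (Fin n) K)) := by
    apply sup_le
    · apply Ideal.span_le.mpr
      rintro f ⟨j, rfl⟩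
      rw [SetLike.mem_coe, aux_mem_span_X]
      obtain ⟨k, hk, hk0⟩ := hcol j
      have hneg : _root_.negPart (fun l => L l j) ≠ 0 := by
        intro hq
        have : (-(L k j)).toNat = 0 := by
          have := DFunLike.congr_fun hq k
          simpa [_root_.negPart] using this
        have hk' : L k j < 0 := lt_of_le_of_ne (hoff k j hk) hk0
        omega
      have hposne : Finsupp.single j (L j j).toNat ≠ 0 := by
        intro h
        have := hdiag j
        have := Finsupp.single_eq_zero.mp h
        omega
      simp [binom, hpos j, constantCoeff_monomial, hneg, hposne]
    · apply Ideal.span_le.mpr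
      rintro f rfl
      exact Ideal.subset_span ⟨i, rfl⟩
  -- Step 2 : radical ≤ 𝔪
  apply le_antisymm
  · intro f hf
    obtain ⟨N, hN⟩ := hf
    rw [aux_mem_span_X]
    have hc := (aux_mem_span_X _).mp (hle hN)
    rw [map_pow] at hc
    rcases Nat.eq_zero_or_pos N with rfl | hNpos
    · simp at hc
    · exact pow_eq_zero_iff hNpos.ne' |>.mp hc
  -- Step 3 : 𝔪 ≤ radical
  · set S : Set (Fin n) := {j | X j ∈ I0.radical} with hS
    have hiS : i ∈ S :=
      Ideal.le_radical (Ideal.mem_sup_right (Ideal.mem_span_singleton_self _))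
    have step : ∀ j k : Fin n, k ≠ j → L k j ≠ 0 → k ∈ S → j ∈ S := by
      intro j k hkj hk0 hkS
      have hq : (X j : MvPolynomial (Fin n) K) ^ (L j j).toNat =
          binom K (fun l => L l j) + monomial (_root_.negPart fun l => L l j) 1 := by
        rw [binom, hpos j, ← X_pow_eq_monomial]; ring
      have hmon : (monomial (_root_.negPart fun l => L l j) (1:K)) ∈ I0.radical := by
        rw [aux_monomial_eq_prod, ← Finset.mul_prod_erase univ _ (mem_univ k)]
        apply Ideal.mul_mem_right
        apply Ideal.pow_mem_of_mem _ hkS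
        have hlt : L k j < 0 := lt_of_le_of_ne (hoff k j hkj) hk0
        simp only [_root_.negPart, Finsupp.coe_equivFunOnFinite_symm]
        omega
      have hXpow : (X j : MvPolynomial (Fin n) K) ^ (L j j).toNat ∈ I0.radical := by
        rw [hq]
        exact add_mem (Ideal.le_radical (Ideal.mem_sup_left (hbinmem j))) hmon
      have hmem : (X j : MvPolynomial (Fin n) K) ∈ I0.radical.radical :=
        ⟨(L j j).toNat, hXpow⟩
      rwa [Ideal.radical_idem] at hmem
    have hSuniv : S = Set.univ := by
      by_contra hne
      apply hirr
      refine ⟨S, Sᶜ, ⟨i, hiS⟩, Set.nonempty_compl.mpr hne, disjoint_compl_right,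
        Set.union_compl_self S, ?_⟩
      intro k hk j hj
      by_contra h0
      have hkj : k ≠ j := fun h => hj (h ▸ hk)
      exact hj (step j k hkj h0 hk)
    apply Ideal.span_le.mpr
    rintro f ⟨j, rfl⟩
    exact Set.eq_univ_iff_forall.mp hSuniv j
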